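/- arXiv:2603.00215 — 3 statements merged into one kernel-verified Lean document; each statement's English description precedes it below -/
import Mathlib

section
/- The number of unordered triples of collinear points in the grid {0,...,n-1}² is at most C·n⁴ log n for some absolute constant C and all n ≥ 2. -/
noncomputable def grid (n : ℕ) : Finset (ℤ × ℤ) :=
  (Finset.Icc 0 ((n : ℤ) - 1)) ×ˢ (Finset.Icc 0 ((n : ℤ) - 1))

def CollinearSet (s : Finset (ℤ × ℤ)) : Prop :=
  ∀ p ∈ s, ∀ q ∈ s, ∀ r ∈ s,
    (q.1 - p.1) * (r.2 - p.2) = (q.2 - p.2) * (r.1 - p.1)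

instance : DecidablePred CollinearSet := fun s => by unfold CollinearSet; infer_instance

noncomputable def collinearTriples (n : ℕ) : ℕ :=
  (((grid n).powersetCard 3).filter CollinearSet).card

/-! ### Auxiliary definitions -/

def LexLT (p q : ℤ × ℤ) : Prop := p.1 < q.1 ∨ (p.1 = q.1 ∧ p.2 < q.2)

noncomputable def trip (s : Finset (ℤ × ℤ)) : (ℤ×ℤ) × (ℤ×ℤ) × (ℤ×ℤ) :=
  match (s.image (toLex : ℤ×ℤ → ℤ ×ₗ ℤ)).sort (· ≤ ·) with
  | [a, b, c] => (ofLex a, ofLex b, ofLex c)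
  | _ => (0, 0, 0)

noncomputable def kOf (a b c : ℤ × ℤ) : ℤ :=
  if c.1 - a.1 ≠ 0 then (b.1 - a.1) / ((c.1 - a.1) / (Int.gcd (c.1 - a.1) (c.2 - a.2) : ℤ))
  else (b.2 - a.2) / ((c.2 - a.2) / (Int.gcd (c.1 - a.1) (c.2 - a.2) : ℤ))

def G (n : ℕ) : ℕ := ∑ q ∈ Finset.range n ×ˢ Finset.range n, Nat.gcd q.1 q.2

lemma trip_spec {s : Finset (ℤ × ℤ)} (h : s.card = 3) :
    ∃ a b c, trip s = (a, b, c) ∧ s = {a, b, c} ∧ LexLT a b ∧ LexLT b c := by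
  classical
  set t := s.image (toLex : ℤ×ℤ → ℤ ×ₗ ℤ) with ht
  have htc : t.card = 3 := by
    rw [ht, Finset.card_image_of_injective _ toLex.injective, h]
  have hlen : (t.sort (· ≤ ·)).length = 3 := by rw [Finset.length_sort, htc]
  have hsorted := (Finset.sortedLT_sort t).pairwise
  match hl : t.sort (· ≤ ·), hlen with
  | [a, b, c], _ =>
    rw [hl] at hsorted
    obtain ⟨⟨hab, -⟩, hbc⟩ : (a < b ∧ a < c) ∧ b < c := by
      simpa [List.pairwise_cons] using hsorted
    refine ⟨ofLex a, ofLex b, ofLex c, ?_, ?_, ?_, ?_⟩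
    · simp only [trip, ← ht, hl]
    · have hts : t = {a, b, c} := by
        ext x
        rw [← Finset.mem_sort (α := ℤ ×ₗ ℤ) (· ≤ ·), hl]
        simp
      have hst : s = t.image (ofLex : ℤ ×ₗ ℤ → ℤ×ℤ) := by
        rw [ht, Finset.image_image]
        have : (ofLex : ℤ ×ₗ ℤ → ℤ×ℤ) ∘ (toLex : ℤ×ℤ → ℤ ×ₗ ℤ) = id := rfl
        rw [this, Finset.image_id]
      rw [hst, hts]
      simp [Finset.image_insert]
    · exact Prod.lex_iff.mp hab
    · exact Prod.lex_iff.mp hbc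

lemma scal_pos {u w k x y : ℤ} (hx : x = k * u) (hy : y = k * w)
    (hp : 0 < x ∨ (x = 0 ∧ 0 < y)) (hq : 0 < u ∨ (u = 0 ∧ 0 < w)) : 0 < k := by
  rcases hq with hu | ⟨hu, hw⟩
  · rcases hp with hx' | ⟨hx', hy'⟩
    · nlinarith
    · exfalso
      have hk : k = 0 := by
        rcases mul_eq_zero.mp (hx ▸ hx') with h | h
        · exact h
        · omega
      rw [hk, zero_mul] at hy; omega
  · subst hu
    rcases hp with hx' | ⟨hx', hy'⟩
    · simp [hx] at hx'
    · nlinarith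

lemma key {a b c : ℤ × ℤ} (hab : LexLT a b) (hbc : LexLT b c)
    (hcol : (b.1 - a.1) * (c.2 - a.2) = (b.2 - a.2) * (c.1 - a.1)) :
    1 ≤ kOf a b c ∧ kOf a b c ≤ (Int.gcd (c.1 - a.1) (c.2 - a.2) : ℤ) - 1 ∧
    b.1 - a.1 = kOf a b c * ((c.1 - a.1) / (Int.gcd (c.1 - a.1) (c.2 - a.2) : ℤ)) ∧
    b.2 - a.2 = kOf a b c * ((c.2 - a.2) / (Int.gcd (c.1 - a.1) (c.2 - a.2) : ℤ)) := by
  set dx := c.1 - a.1 with hdx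
  set dy := c.2 - a.2 with hdy
  set g : ℤ := (Int.gcd dx dy : ℤ) with hg
  have hlex_ac : 0 < dx ∨ (dx = 0 ∧ 0 < dy) := by
    unfold LexLT at hab hbc
    rw [hdx, hdy]; omega
  have hgN : 0 < Int.gcd dx dy := by
    refine Nat.pos_of_ne_zero fun h0 => ?_
    rw [Int.gcd_eq_zero_iff] at h0
    omega
  have hg0 : 0 < g := by rw [hg]; exact_mod_cast hgN
  set u := dx / g with hu
  set w := dy / g with hw
  have hdxu : dx = g * u := by
    rw [hu, Int.mul_ediv_cancel' (Int.gcd_dvd_left _ _)]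
  have hdyw : dy = g * w := by
    rw [hw, Int.mul_ediv_cancel' (Int.gcd_dvd_right _ _)]
  have hlex_uw : 0 < u ∨ (u = 0 ∧ 0 < w) := by
    rcases hlex_ac with h | ⟨h1, h2⟩
    · left; nlinarith
    · right
      constructor
      · have : g * u = 0 := by omega
        rcases mul_eq_zero.mp this with h | h <;> omega
      · nlinarith
  have hcol' : (b.1 - a.1) * w = (b.2 - a.2) * u := by
    have h2 : g * ((b.1 - a.1) * w) = g * ((b.2 - a.2) * u) := by
      linear_combination hcol - (b.1 - a.1) * hdyw + (b.2 - a.2) * hdxu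
    exact mul_left_cancel₀ hg0.ne' h2
  obtain ⟨k, hk1, hk2⟩ : ∃ k, b.1 - a.1 = k * u ∧ b.2 - a.2 = k * w := by
    rcases eq_or_ne u 0 with hu0 | hu0
    · have hw0 : 0 < w := by rcases hlex_uw with h | ⟨_, h⟩ <;> omega
      have hcop : Int.gcd u w = 1 := by
        rw [hu, hw, hg]
        exact Int.gcd_div_gcd_div_gcd hgN
      have hw1 : w = 1 := by
        rw [hu0] at hcop
        simp [Int.gcd] at hcop
        omega
      have hB1 : b.1 - a.1 = 0 := by
        have := hcol'
        rw [hu0, mul_zero, hw1, mul_one] at this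
        exact this
      exact ⟨b.2 - a.2, by rw [hu0, mul_zero]; exact hB1, by rw [hw1, mul_one]⟩
    · have hcop : IsCoprime u w := by
        rw [Int.isCoprime_iff_gcd_eq_one, hu, hw, hg]
        exact Int.gcd_div_gcd_div_gcd hgN
      have hdvd : u ∣ (b.1 - a.1) := by
        refine hcop.dvd_of_dvd_mul_right ⟨b.2 - a.2, ?_⟩
        rw [hcol']; ring
      obtain ⟨k, hk⟩ := hdvd
      refine ⟨k, by rw [hk]; ring, ?_⟩
      have h3 : u * (b.2 - a.2) = u * (k * w) := by
        rw [hk] at hcol'; nlinarith [hcol']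
      exact mul_left_cancel₀ hu0 h3
  have hdxu0 : dx ≠ 0 → u ≠ 0 := by
    intro h h0; rw [hdxu, h0, mul_zero] at h; exact h rfl
  have hkof : kOf a b c = k := by
    unfold kOf
    rw [← hdx, ← hdy, ← hg, ← hu, ← hw]
    split_ifs with h
    · rw [hk1]; exact Int.mul_ediv_cancel k (hdxu0 h)
    · have hu0 : u = 0 := by
        push_neg at h
        rw [hu, h, Int.zero_ediv]
      have hw0 : 0 < w := by rcases hlex_uw with hh | ⟨_, hh⟩ <;> omega
      have hw1 : w = 1 := by
        have hcop : Int.gcd u w = 1 := by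
          rw [hu, hw, hg]
          exact Int.gcd_div_gcd_div_gcd hgN
        rw [hu0] at hcop
        simp [Int.gcd] at hcop
        omega
      rw [hk2, hw1]; simp
  rw [hkof]
  have hlexab : 0 < b.1 - a.1 ∨ (b.1 - a.1 = 0 ∧ 0 < b.2 - a.2) := by
    unfold LexLT at hab; omega
  have hlexbc : 0 < c.1 - b.1 ∨ (c.1 - b.1 = 0 ∧ 0 < c.2 - b.2) := by
    unfold LexLT at hbc; omega
  have hkpos : 0 < k := scal_pos hk1 hk2 hlexab hlex_uw
  have hgk : 0 < g - k := by
    refine scal_pos (x := c.1 - b.1) (y := c.2 - b.2) (k := g - k) (u := u) (w := w) ?_ ?_ ?_ hlex_uw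
    · have : c.1 - b.1 = dx - (b.1 - a.1) := by rw [hdx]; ring
      rw [this, hdxu, hk1]; ring
    · have : c.2 - b.2 = dy - (b.2 - a.2) := by rw [hdy]; ring
      rw [this, hdyw, hk2]; ring
    · rcases hlexbc with h | h
      · left; omega
      · right; omega
  exact ⟨hkpos, by omega, hk1, hk2⟩

lemma count1 (n : ℕ) :
    collinearTriples n ≤ ∑ p ∈ grid n ×ˢ grid n,
      Int.gcd (p.2.1 - p.1.1) (p.2.2 - p.1.2) := by
  classical
  set S : Finset ((_ : (ℤ×ℤ) × (ℤ×ℤ)) × ℤ) :=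
    (grid n ×ˢ grid n).sigma
      (fun p => Finset.Icc 1 ((Int.gcd (p.2.1 - p.1.1) (p.2.2 - p.1.2) : ℤ) - 1)) with hS
  have h1 : collinearTriples n ≤ S.card := by
    apply Finset.card_le_card_of_injOn
      (fun s => ⟨((trip s).1, (trip s).2.2), kOf (trip s).1 (trip s).2.1 (trip s).2.2⟩)
    · intro s hs
      rw [Finset.mem_coe, Finset.mem_filter, Finset.mem_powersetCard] at hs
      obtain ⟨⟨hsub, hcard⟩, hcol⟩ := hs
      obtain ⟨a, b, c, htrip, hset, hab, hbc⟩ := trip_spec hcard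
      have ha : a ∈ s := by rw [hset]; simp
      have hb : b ∈ s := by rw [hset]; simp
      have hc : c ∈ s := by rw [hset]; simp
      have hcol' := hcol a ha b hb c hc
      obtain ⟨hk1, hk2, -, -⟩ := key hab hbc hcol'
      simp only [htrip]
      simp only [hS, Finset.mem_coe, Finset.mem_sigma, Finset.mem_product, Finset.mem_Icc]
      exact ⟨⟨hsub ha, hsub hc⟩, hk1, hk2⟩
    · intro s₁ hs₁ s₂ hs₂ hf
      simp only [Finset.coe_filter, Set.mem_setOf_eq, Finset.mem_powersetCard] at hs₁ hs₂
      obtain ⟨⟨hsub₁, hcard₁⟩, hcol₁⟩ := hs₁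
      obtain ⟨⟨hsub₂, hcard₂⟩, hcol₂⟩ := hs₂
      obtain ⟨a₁, b₁, c₁, htrip₁, hset₁, hab₁, hbc₁⟩ := trip_spec hcard₁
      obtain ⟨a₂, b₂, c₂, htrip₂, hset₂, hab₂, hbc₂⟩ := trip_spec hcard₂
      dsimp only at hf
      rw [htrip₁, htrip₂] at hf
      simp only [Sigma.mk.inj_iff, Prod.mk.injEq, heq_eq_eq] at hf
      obtain ⟨⟨hac, hcc⟩, hkk⟩ := hf
      obtain ⟨-, -, he1, he2⟩ := key hab₁ hbc₁
        (hcol₁ a₁ (by rw [hset₁]; simp) b₁ (by rw [hset₁]; simp) c₁ (by rw [hset₁]; simp))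
      obtain ⟨-, -, hf1, hf2⟩ := key hab₂ hbc₂
        (hcol₂ a₂ (by rw [hset₂]; simp) b₂ (by rw [hset₂]; simp) c₂ (by rw [hset₂]; simp))
      subst hac; subst hcc
      have hb : b₁ = b₂ := by
        rw [hkk] at he1 he2
        have h1 : b₁.1 = b₂.1 := by omega
        have h2 : b₁.2 = b₂.2 := by omega
        exact Prod.ext h1 h2
      rw [hset₁, hset₂, hb]
  have h2 : S.card = ∑ p ∈ grid n ×ˢ grid n,
      ((Int.gcd (p.2.1 - p.1.1) (p.2.2 - p.1.2) : ℤ) - 1).toNat := by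
    rw [hS, Finset.card_sigma]
    congr 1; ext p
    rw [Int.card_Icc]
    congr 1; omega
  refine h1.trans (h2.le.trans ?_)
  exact Finset.sum_le_sum fun p _ => by omega

lemma count2 (n : ℕ) :
    (∑ p ∈ grid n ×ˢ grid n, Int.gcd (p.2.1 - p.1.1) (p.2.2 - p.1.2))
      ≤ n ^ 2 * (4 * G n) := by
  classical
  rw [Finset.sum_product]
  have hcard : (grid n).card = n ^ 2 := by
    have h : ((n:ℤ) - 1 + 1 - 0).toNat = n := by omega
    rw [grid, Finset.card_product, Int.card_Icc, h, sq]
  calc ∑ a ∈ grid n, ∑ c ∈ grid n, Int.gcd (c.1 - a.1) (c.2 - a.2)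
      ≤ ∑ _a ∈ grid n, 4 * G n := by
        refine Finset.sum_le_sum fun a _ha => ?_
        have hmain : ∑ c ∈ grid n, Int.gcd (c.1 - a.1) (c.2 - a.2)
            = ∑ q ∈ (grid n).image
                (fun c : ℤ × ℤ => ((c.1 - a.1).natAbs, (c.2 - a.2).natAbs)),
                ((grid n).filter
                  (fun c : ℤ × ℤ => ((c.1 - a.1).natAbs, (c.2 - a.2).natAbs) = q)).card
                  • Nat.gcd q.1 q.2 :=
          Finset.sum_comp (fun q : ℕ × ℕ => Nat.gcd q.1 q.2)
            (fun c : ℤ × ℤ => ((c.1 - a.1).natAbs, (c.2 - a.2).natAbs))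
        rw [hmain]
        have himg : (grid n).image (fun c : ℤ × ℤ => ((c.1 - a.1).natAbs, (c.2 - a.2).natAbs))
            ⊆ Finset.range n ×ˢ Finset.range n := by
          intro q hq
          simp only [Finset.mem_image] at hq
          obtain ⟨c, hc, hcq⟩ := hq
          simp only [grid, Finset.mem_product, Finset.mem_Icc] at hc _ha
          simp only [Finset.mem_product, Finset.mem_range, ← hcq]
          omega
        calc ∑ q ∈ (grid n).image (fun c : ℤ × ℤ => ((c.1 - a.1).natAbs, (c.2 - a.2).natAbs)),
              ((grid n).filter
                (fun c : ℤ × ℤ => ((c.1 - a.1).natAbs, (c.2 - a.2).natAbs) = q)).card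
                • Nat.gcd q.1 q.2
            ≤ ∑ q ∈ (grid n).image (fun c : ℤ × ℤ => ((c.1 - a.1).natAbs, (c.2 - a.2).natAbs)),
              4 * Nat.gcd q.1 q.2 := by
              refine Finset.sum_le_sum fun q _hq => ?_
              have hsub : (grid n).filter
                  (fun c : ℤ × ℤ => ((c.1 - a.1).natAbs, (c.2 - a.2).natAbs) = q)
                  ⊆ ({a.1 - (q.1 : ℤ), a.1 + (q.1 : ℤ)} : Finset ℤ) ×ˢ
                    ({a.2 - (q.2 : ℤ), a.2 + (q.2 : ℤ)} : Finset ℤ) := by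
                intro c hc
                simp only [Finset.mem_filter, Prod.ext_iff] at hc
                obtain ⟨-, h1, h2⟩ := hc
                rcases Int.natAbs_eq_iff.mp h1 with h | h <;>
                  rcases Int.natAbs_eq_iff.mp h2 with h' | h' <;>
                  simp only [Finset.mem_product, Finset.mem_insert, Finset.mem_singleton] <;>
                  omega
              have hc4 : ((grid n).filter
                  (fun c : ℤ × ℤ => ((c.1 - a.1).natAbs, (c.2 - a.2).natAbs) = q)).card ≤ 4 := by
                refine (Finset.card_le_card hsub).trans ?_
                rw [Finset.card_product]
                have h1 := Finset.card_insert_le (a.1 - (q.1:ℤ)) {a.1 + (q.1:ℤ)}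
                have h2 := Finset.card_insert_le (a.2 - (q.2:ℤ)) {a.2 + (q.2:ℤ)}
                simp at h1 h2
                nlinarith
              rw [smul_eq_mul]
              exact Nat.mul_le_mul_right _ hc4
          _ ≤ 4 * G n := by
              rw [← Finset.mul_sum]
              exact Nat.mul_le_mul_left 4 (Finset.sum_le_sum_of_subset himg)
    _ = n ^ 2 * (4 * G n) := by rw [Finset.sum_const, hcard, smul_eq_mul]

lemma dvd_count (n d : ℕ) (hn : 1 ≤ n) :
    ((Finset.range n).filter (fun x => d ∣ x)).card = (n - 1) / d + 1 := by
  have h : (Finset.range n).filter (fun x => d ∣ x)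
      = insert 0 ((Finset.Ioc 0 (n-1)).filter (fun x => d ∣ x)) := by
    ext x
    simp only [Finset.mem_filter, Finset.mem_range, Finset.mem_insert, Finset.mem_Ioc]
    constructor
    · rintro ⟨hx, hdx⟩
      rcases Nat.eq_zero_or_pos x with h0 | h0
      · left; exact h0
      · right; exact ⟨⟨h0, by omega⟩, hdx⟩
    · rintro (rfl | ⟨⟨h1, h2⟩, h3⟩)
      · exact ⟨by omega, Dvd.intro 0 rfl⟩
      · exact ⟨by omega, h3⟩
  rw [h, Finset.card_insert_of_notMem (by simp), Nat.Ioc_filter_dvd_card_eq_div]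

lemma count3 (n : ℕ) (hn : 1 ≤ n) :
    G n ≤ ∑ d ∈ Finset.Icc 1 n, d * ((n - 1) / d + 1) ^ 2 := by
  classical
  have step1 : G n ≤ ∑ q ∈ Finset.range n ×ˢ Finset.range n,
      ∑ d ∈ Finset.Icc 1 n, if Nat.gcd q.1 q.2 = d then d else 0 := by
    refine Finset.sum_le_sum fun q hq => ?_
    simp only [Finset.mem_product, Finset.mem_range] at hq
    rw [Finset.sum_ite_eq (Finset.Icc 1 n) (Nat.gcd q.1 q.2) (fun x => x)]
    by_cases h : Nat.gcd q.1 q.2 ∈ Finset.Icc 1 n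
    · simp [h]
    · simp only [h, if_false]
      rcases Nat.eq_zero_or_pos (Nat.gcd q.1 q.2) with h0 | h0
      · omega
      · exfalso
        apply h
        rw [Finset.mem_Icc]
        refine ⟨h0, ?_⟩
        rcases Nat.eq_zero_or_pos q.1 with h1 | h1
        · rw [h1, Nat.gcd_zero_left]
          omega
        · exact (Nat.gcd_le_left _ h1).trans (by omega)
  rw [Finset.sum_comm] at step1
  refine step1.trans (Finset.sum_le_sum fun d hd => ?_)
  rw [Finset.mem_Icc] at hd
  have hstep : (∑ q ∈ Finset.range n ×ˢ Finset.range n,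
      if Nat.gcd q.1 q.2 = d then d else 0)
      = ((Finset.range n ×ˢ Finset.range n).filter
          (fun q : ℕ × ℕ => Nat.gcd q.1 q.2 = d)).card * d := by
    rw [← Finset.sum_filter, Finset.sum_const, smul_eq_mul]
  rw [hstep]
  have hsub : (Finset.range n ×ˢ Finset.range n).filter
      (fun q : ℕ × ℕ => Nat.gcd q.1 q.2 = d)
      ⊆ (Finset.range n).filter (fun x => d ∣ x) ×ˢ (Finset.range n).filter (fun x => d ∣ x) := by
    intro q hq
    simp only [Finset.mem_filter, Finset.mem_product] at hq ⊢
    obtain ⟨⟨hq1, hq2⟩, hg⟩ := hq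
    exact ⟨⟨hq1, hg ▸ Nat.gcd_dvd_left _ _⟩, hq2, hg ▸ Nat.gcd_dvd_right _ _⟩
  calc ((Finset.range n ×ˢ Finset.range n).filter
          (fun q : ℕ × ℕ => Nat.gcd q.1 q.2 = d)).card * d
      ≤ ((n - 1) / d + 1) ^ 2 * d := by
        have h := Finset.card_le_card hsub
        rw [Finset.card_product, dvd_count n d hn, ← sq] at h
        exact Nat.mul_le_mul_right d h
    _ = d * ((n - 1) / d + 1) ^ 2 := Nat.mul_comm _ _

lemma count4 (n : ℕ) (hn : 1 ≤ n) :
    ((∑ d ∈ Finset.Icc 1 n, d * ((n - 1) / d + 1) ^ 2 : ℕ) : ℝ)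
      ≤ 4 * (n : ℝ) ^ 2 * (1 + Real.log n) := by
  have step : ((∑ d ∈ Finset.Icc 1 n, d * ((n - 1) / d + 1) ^ 2 : ℕ) : ℝ)
      ≤ ∑ d ∈ Finset.Icc 1 n, 4 * (n : ℝ) ^ 2 * (1 / (d : ℝ)) := by
    rw [Nat.cast_sum]
    refine Finset.sum_le_sum fun d hd => ?_
    rw [Finset.mem_Icc] at hd
    have hd0 : (0 : ℝ) < d := by exact_mod_cast hd.1
    rw [Nat.cast_mul, Nat.cast_pow]
    have hq : (((n - 1) / d + 1 : ℕ) : ℝ) ≤ 2 * n / d := by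
      have h1 : ((((n - 1) / d : ℕ)) : ℝ) ≤ ((n - 1 : ℕ) : ℝ) / d := Nat.cast_div_le
      have h2 : ((n - 1 : ℕ) : ℝ) ≤ (n : ℝ) := by exact_mod_cast Nat.sub_le n 1
      have h3 : (1 : ℝ) ≤ (n : ℝ) / d := by
        rw [le_div_iff₀ hd0]
        have : (d : ℝ) ≤ n := by exact_mod_cast hd.2
        linarith
      have h4 : ((n - 1 : ℕ) : ℝ) / d ≤ (n : ℝ) / d := by gcongr
      have hcast : (((n - 1) / d + 1 : ℕ) : ℝ) = ((((n - 1) / d : ℕ)) : ℝ) + 1 := by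
        push_cast; ring
      have h5 : 2 * (n : ℝ) / d = n / d + n / d := by ring
      rw [hcast, h5]
      linarith
    calc (d : ℝ) * (((n - 1) / d + 1 : ℕ) : ℝ) ^ 2
        ≤ (d : ℝ) * (2 * n / d) ^ 2 :=
          mul_le_mul_of_nonneg_left (pow_le_pow_left₀ (by positivity) hq 2) hd0.le
      _ = 4 * (n : ℝ) ^ 2 * (1 / d) := by field_simp; ring
  refine step.trans ?_
  rw [← Finset.mul_sum]
  have hharm : ∑ d ∈ Finset.Icc 1 n, (1 : ℝ) / (d : ℝ) = (harmonic n : ℝ) := by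
    rw [harmonic_eq_sum_Icc]
    push_cast
    simp [one_div]
  rw [hharm]
  have hh := harmonic_le_one_add_log n
  have h4 : (0 : ℝ) ≤ 4 * (n : ℝ) ^ 2 := by positivity
  exact mul_le_mul_of_nonneg_left (by exact_mod_cast hh) h4

theorem collinearTriples_upper :
    ∃ C : ℝ, ∀ n : ℕ, 2 ≤ n →
      (collinearTriples n : ℝ) ≤ C * (n : ℝ) ^ 4 * Real.log n := by
  use 16 * (1 / Real.log 2 + 1)
  intro n hn
  have hn1 : 1 ≤ n := by omega
  have hn0 : (0 : ℝ) < n := by exact_mod_cast Nat.lt_of_lt_of_le Nat.zero_lt_one hn1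
  have h1 : (collinearTriples n : ℝ) ≤ (n : ℝ) ^ 2 * (4 * (G n : ℝ)) := by
    have := (count1 n).trans (count2 n)
    exact_mod_cast this
  have h2 : ((G n : ℕ) : ℝ)
      ≤ ((∑ d ∈ Finset.Icc 1 n, d * ((n - 1) / d + 1) ^ 2 : ℕ) : ℝ) := by
    exact_mod_cast count3 n hn1
  have h3 := count4 n hn1
  have hlog2 : 0 < Real.log 2 := Real.log_pos (by norm_num)
  have hlogn : Real.log 2 ≤ Real.log n := by
    apply Real.log_le_log (by norm_num)
    exact_mod_cast hn
  have hlognpos : 0 < Real.log n := lt_of_lt_of_le hlog2 hlogn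
  have hone : (1 : ℝ) ≤ Real.log n / Real.log 2 := (one_le_div hlog2).mpr hlogn
  have hGb : (G n : ℝ) ≤ 4 * (n : ℝ) ^ 2 * (1 + Real.log n) := h2.trans h3
  calc (collinearTriples n : ℝ)
      ≤ (n : ℝ) ^ 2 * (4 * (G n : ℝ)) := h1
    _ ≤ (n : ℝ) ^ 2 * (4 * (4 * (n : ℝ) ^ 2 * (1 + Real.log n))) := by
        gcongr
    _ = 16 * (n : ℝ) ^ 4 * (1 + Real.log n) := by ring
    _ ≤ 16 * (n : ℝ) ^ 4 * ((1 / Real.log 2) * Real.log n + Real.log n) := by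
        have hx : (1 : ℝ) ≤ (1 / Real.log 2) * Real.log n := by
          rw [one_div, inv_mul_eq_div]; exact hone
        have h5 : (0 : ℝ) ≤ 16 * (n : ℝ) ^ 4 := by positivity
        nlinarith
    _ = 16 * (1 / Real.log 2 + 1) * (n : ℝ) ^ 4 * Real.log n := by ring
end

section
/- The number of unordered triples of collinear points in the grid {0,...,n-1}² is at least c·n⁴ log n for some absolute constant c > 0 and all sufficiently large n. -/
open Filter

open Finset

def copPairs (m : ℕ) : Finset (ℕ × ℕ) :=
  (Finset.Icc 1 m ×ˢ Finset.Icc 1 m).filter fun ab => Nat.gcd ab.1 ab.2 = 1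

lemma tele (M : ℕ) : ∑ i ∈ Icc 1 M, ((1:ℝ)/i - 1/(i+1)) = 1 - 1/(M+1) := by
  induction M with
  | zero => simp
  | succ M ih =>
      rw [Finset.sum_Icc_succ_top (by omega : 1 ≤ M + 1), ih]
      push_cast
      have : (M:ℝ) + 1 ≠ 0 := by positivity
      have : (M:ℝ) + 1 + 1 ≠ 0 := by positivity
      field_simp
      ring

lemma card_dvd_filter (m p : ℕ) : ((Icc 1 m).filter (fun x => p ∣ x)).card = m / p := by
  have : Icc 1 m = Ioc 0 m := by rw [← Finset.Icc_add_one_left_eq_Ioc, zero_add]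
  rw [this]
  exact Nat.Ioc_filter_dvd_card_eq_div m p

lemma copPairs_card (m : ℕ) : (m:ℝ)^2 / 2 ≤ ((copPairs m).card : ℝ) := by
  classical
  set T : Finset (ℕ × ℕ) := Finset.Icc 1 m ×ˢ Finset.Icc 1 m with hT
  have hTcard : T.card = m^2 := by
    simp [hT, Nat.card_Icc, sq]
  set P : Finset ℕ := (Icc 2 m).filter Nat.Prime with hP
  set g : ℕ → Finset (ℕ × ℕ) := fun p => T.filter (fun ab => p ∣ ab.1 ∧ p ∣ ab.2) with hg
  -- non-coprime pairs are covered
  have hsub : T.filter (fun ab => ¬ Nat.gcd ab.1 ab.2 = 1) ⊆ P.biUnion g := by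
    intro ab hab
    rw [mem_filter] at hab
    obtain ⟨habT, hnc⟩ := hab
    have ha : 1 ≤ ab.1 ∧ ab.1 ≤ m := by
      have := (Finset.mem_product.mp habT).1; simpa using this
    have hg2 : 2 ≤ Nat.gcd ab.1 ab.2 := by
      have h1 : Nat.gcd ab.1 ab.2 ≠ 0 := by
        intro h; have := Nat.eq_zero_of_gcd_eq_zero_left h; omega
      omega
    set q := (Nat.gcd ab.1 ab.2).minFac with hq
    have hqp : q.Prime := Nat.minFac_prime (by omega)
    have hqd : q ∣ Nat.gcd ab.1 ab.2 := Nat.minFac_dvd _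
    have hq1 : q ∣ ab.1 := hqd.trans (Nat.gcd_dvd_left _ _)
    have hq2 : q ∣ ab.2 := hqd.trans (Nat.gcd_dvd_right _ _)
    have hqm : q ≤ m := le_trans (Nat.le_of_dvd (by omega) hq1) ha.2
    rw [Finset.mem_biUnion]
    exact ⟨q, by simp [hP, hqp, hqp.two_le, hqm], by simp [hg, habT, hq1, hq2]⟩
  -- card of each piece
  have hgcard : ∀ p, (g p).card = (m / p)^2 := by
    intro p
    have : g p = ((Icc 1 m).filter (fun x => p ∣ x)) ×ˢ ((Icc 1 m).filter (fun x => p ∣ x)) := by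
      rw [hg, hT]
      exact Finset.filter_product _ _
    rw [this, Finset.card_product, card_dvd_filter, sq]
  -- the sum bound
  have hsum : ∑ p ∈ P, (((m / p : ℕ) : ℝ))^2 ≤ (m:ℝ)^2 / 2 := by
    have hstep : ∑ p ∈ P, (((m / p : ℕ) : ℝ))^2 ≤
        (((m / 2 : ℕ) : ℝ))^2 + ∑ p ∈ P.erase 2, (((m / p : ℕ) : ℝ))^2 := by
      by_cases h2 : 2 ∈ P
      · rw [← Finset.sum_erase_add P _ h2]; linarith
      · rw [Finset.erase_eq_of_notMem h2]
        have : (0:ℝ) ≤ (((m / 2 : ℕ) : ℝ))^2 := by positivity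
        linarith
    have hodd : ∀ p ∈ P.erase 2, p % 2 = 1 ∧ 3 ≤ p ∧ p ≤ m := by
      intro p hp
      rw [Finset.mem_erase, hP, Finset.mem_filter, Finset.mem_Icc] at hp
      have := hp.2.2.two_le
      have hodd := hp.2.2.odd_of_ne_two hp.1
      rcases hodd with ⟨t, ht⟩
      exact ⟨by omega, by omega, hp.2.1.2⟩
    set G : ℕ → ℝ := fun i => (m:ℝ)^2/4 * (1/(i:ℝ) - 1/((i:ℝ)+1)) with hG
    have hbound : ∀ p ∈ P.erase 2, (((m / p : ℕ) : ℝ))^2 ≤ G (p / 2) := by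
      intro p hp
      obtain ⟨hp1, hp3, hpm⟩ := hodd p hp
      simp only [hG]
      set i := p / 2 with hi
      have hpi : p = 2*i + 1 := by omega
      have hi1 : 1 ≤ i := by omega
      have h1 : (((m / p : ℕ) : ℝ)) ≤ (m:ℝ)/p := by
        exact_mod_cast Nat.cast_div_le
      have h0 : (0:ℝ) ≤ ((m / p : ℕ) : ℝ) := by positivity
      have h2 : (((m / p : ℕ) : ℝ))^2 ≤ ((m:ℝ)/p)^2 := by
        apply pow_le_pow_left₀ h0 h1
      refine h2.trans ?_
      have hiR : (1:ℝ) ≤ (i:ℝ) := by exact_mod_cast hi1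
      have hpR : (p:ℝ) = 2*(i:ℝ)+1 := by exact_mod_cast hpi
      have e0 : (1/(i:ℝ) - 1/((i:ℝ)+1)) = 1/((i:ℝ)*((i:ℝ)+1)) := by
        field_simp
        ring
      have e1 : (m:ℝ)^2/4 * (1/((i:ℝ)*((i:ℝ)+1))) = (m:ℝ)^2 / (4*((i:ℝ)*((i:ℝ)+1))) := by
        rw [div_mul_div_comm, mul_one]
      rw [e0, e1, div_pow, hpR, div_le_div_iff₀ (by positivity) (by positivity)]
      nlinarith [sq_nonneg (m:ℝ)]
    have hGnonneg : ∀ i ∈ Icc 1 m, 0 ≤ G i := by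
      intro i hi
      rw [Finset.mem_Icc] at hi
      simp only [hG]
      have hiR : (1:ℝ) ≤ (i:ℝ) := by exact_mod_cast hi.1
      have : 1/((i:ℝ)+1) ≤ 1/(i:ℝ) := by
        apply one_div_le_one_div_of_le <;> linarith
      nlinarith [sq_nonneg (m:ℝ)]
    have hinj : Set.InjOn (fun p => p / 2) (P.erase 2 : Finset ℕ) := by
      intro p hp q hq hpq
      obtain ⟨hp1, hp3, _⟩ := hodd p hp
      obtain ⟨hq1, hq3, _⟩ := hodd q hq
      simp only at hpq
      omega
    have himg : (P.erase 2).image (fun p => p / 2) ⊆ Icc 1 m := by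
      intro i hi
      rw [Finset.mem_image] at hi
      obtain ⟨p, hp, rfl⟩ := hi
      obtain ⟨hp1, hp3, hpm⟩ := hodd p hp
      rw [Finset.mem_Icc]; omega
    have h3 : ∑ p ∈ P.erase 2, (((m / p : ℕ) : ℝ))^2 ≤ ∑ p ∈ P.erase 2, G (p / 2) :=
      Finset.sum_le_sum hbound
    have h4 : ∑ p ∈ P.erase 2, G (p / 2) = ∑ i ∈ (P.erase 2).image (fun p => p / 2), G i :=
      (Finset.sum_image (fun p hp q hq => hinj hp hq)).symm
    have h5 : ∑ i ∈ (P.erase 2).image (fun p => p / 2), G i ≤ ∑ i ∈ Icc 1 m, G i :=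
      Finset.sum_le_sum_of_subset_of_nonneg himg (fun i hi _ => hGnonneg i hi)
    have h6 : ∑ i ∈ Icc 1 m, G i ≤ (m:ℝ)^2/4 := by
      simp only [hG]
      rw [← Finset.mul_sum, tele]
      have : 1/((m:ℝ)+1) ≥ 0 := by positivity
      nlinarith [sq_nonneg (m:ℝ)]
    have h7 : (((m / 2 : ℕ) : ℝ))^2 ≤ (m:ℝ)^2/4 := by
      have h1 : (((m / 2 : ℕ) : ℝ)) ≤ (m:ℝ)/2 := by exact_mod_cast Nat.cast_div_le
      have h0 : (0:ℝ) ≤ ((m / 2 : ℕ) : ℝ) := by positivity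
      have := pow_le_pow_left₀ h0 h1 2
      rw [div_pow] at this
      linarith
    linarith
  -- assemble
  have hpart := Finset.card_filter_add_card_filter_not (s := T)
      (p := fun ab => Nat.gcd ab.1 ab.2 = 1)
  have hnc : ((T.filter (fun ab => ¬ Nat.gcd ab.1 ab.2 = 1)).card : ℝ) ≤ (m:ℝ)^2/2 := by
    have h1 : (T.filter (fun ab => ¬ Nat.gcd ab.1 ab.2 = 1)).card ≤ (P.biUnion g).card :=
      Finset.card_le_card hsub
    have h2 : (P.biUnion g).card ≤ ∑ p ∈ P, (g p).card := Finset.card_biUnion_le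
    have h3 : ((P.biUnion g).card : ℝ) ≤ ∑ p ∈ P, (((m / p : ℕ)):ℝ)^2 := by
      calc ((P.biUnion g).card : ℝ) ≤ (∑ p ∈ P, (g p).card : ℕ) := by exact_mod_cast h2
        _ = ∑ p ∈ P, (((m / p : ℕ)):ℝ)^2 := by
            push_cast
            apply Finset.sum_congr rfl
            intro p _
            rw [hgcard p]
            push_cast
            ring
    calc ((T.filter (fun ab => ¬ Nat.gcd ab.1 ab.2 = 1)).card : ℝ)
        ≤ ((P.biUnion g).card : ℝ) := by exact_mod_cast h1
      _ ≤ ∑ p ∈ P, (((m / p : ℕ)):ℝ)^2 := h3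
      _ ≤ (m:ℝ)^2/2 := hsum
  have : copPairs m = T.filter (fun ab => Nat.gcd ab.1 ab.2 = 1) := rfl
  rw [this]
  have hcast : ((T.filter (fun ab => Nat.gcd ab.1 ab.2 = 1)).card : ℝ)
      + ((T.filter (fun ab => ¬ Nat.gcd ab.1 ab.2 = 1)).card : ℝ) = (m:ℝ)^2 := by
    rw [← Nat.cast_add, hpart, hTcard]
    push_cast; ring
  linarith

def Param (n : ℕ) : Finset ((_ : ℕ) × (ℕ × (ℕ × ℕ) × (ℕ × ℕ))) :=
  (Finset.Icc 2 (n/8)).sigma fun d =>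
    (Finset.Icc 1 (d-1)) ×ˢ copPairs (n/(8*d)) ×ˢ (Finset.Icc 0 (n/2) ×ˢ Finset.Icc 0 (n/2))

def F : (_ : ℕ) × (ℕ × (ℕ × ℕ) × (ℕ × ℕ)) → Finset (ℤ × ℤ)
  | ⟨d, (k, (a, b), (x, y))⟩ =>
    {((x : ℤ), (y : ℤ)), (((x + k*a : ℕ) : ℤ), ((y + k*b : ℕ) : ℤ)),
     (((x + d*a : ℕ) : ℤ), ((y + d*b : ℕ) : ℤ))}

lemma bounds_of_mem {n : ℕ} {d k a b x y : ℕ}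
    (ht : (⟨d, (k, (a, b), (x, y))⟩ : (_ : ℕ) × (ℕ × (ℕ × ℕ) × (ℕ × ℕ))) ∈ Param n) :
    2 ≤ d ∧ 1 ≤ k ∧ k < d ∧ 1 ≤ a ∧ 1 ≤ b ∧ Nat.gcd a b = 1 ∧
      x ≤ n/2 ∧ y ≤ n/2 ∧ d * a ≤ n/8 ∧ d * b ≤ n/8 := by
  unfold Param copPairs at ht
  rw [Finset.mem_sigma] at ht
  obtain ⟨hd, hrest⟩ := ht
  rw [Finset.mem_Icc] at hd
  simp only [Finset.mem_product, Finset.mem_filter, Finset.mem_Icc] at hrest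
  obtain ⟨⟨hk1, hk2⟩, ⟨⟨⟨ha1, ha2⟩, hb1, hb2⟩, hgcd⟩, ⟨hx1, hx2⟩, hy1, hy2⟩ := hrest
  have hda : d * a ≤ n/8 := by
    calc d * a ≤ d * (n/(8*d)) := Nat.mul_le_mul_left d ha2
      _ = d * (n/8/d) := by rw [Nat.div_div_eq_div_mul]
      _ ≤ n/8 := by rw [mul_comm]; exact Nat.div_mul_le_self _ _
  have hdb : d * b ≤ n/8 := by
    calc d * b ≤ d * (n/(8*d)) := Nat.mul_le_mul_left d hb2
      _ = d * (n/8/d) := by rw [Nat.div_div_eq_div_mul]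
      _ ≤ n/8 := by rw [mul_comm]; exact Nat.div_mul_le_self _ _
  exact ⟨hd.1, hk1, by omega, ha1, hb1, hgcd, hx2, hy2, hda, hdb⟩

lemma collinear_of_line (x y a b : ℤ) (ha : a ≠ 0) (hb : b ≠ 0) (s : Finset (ℤ × ℤ))
    (h : ∀ p ∈ s, b * (p.1 - x) = a * (p.2 - y)) : CollinearSet s := by
  intro p hp q hq r hr
  have hp' := h p hp
  have hq' := h q hq
  have hr' := h r hr
  have key : a * b * ((q.1 - p.1) * (r.2 - p.2)) = a * b * ((q.2 - p.2) * (r.1 - p.1)) := by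
    linear_combination (a*(r.2-p.2))*hq' - (a*(r.2-p.2))*hp' - (a*(q.2-p.2))*hr' + (a*(q.2-p.2))*hp'
  exact mul_left_cancel₀ (mul_ne_zero ha hb) key

lemma card_Param_le (n : ℕ) (hn : 16 ≤ n) : (Param n).card ≤ collinearTriples n := by
  unfold collinearTriples
  apply Finset.card_le_card_of_injOn F
  · -- maps to
    rintro ⟨d, k, ⟨a, b⟩, x, y⟩ ht
    obtain ⟨hd2, hk1, hkd, ha1, hb1, hgcd, hx, hy, hda, hdb⟩ := bounds_of_mem ht
    have hka : k * a < d * a := (Nat.mul_lt_mul_right (by omega : 0 < a)).mpr hkd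
    have hkb : k * b < d * b := (Nat.mul_lt_mul_right (by omega : 0 < b)).mpr hkd
    rw [Finset.mem_coe, Finset.mem_filter, Finset.mem_powersetCard]
    refine ⟨⟨?_, ?_⟩, ?_⟩
    · -- subset of grid
      intro p hp
      simp only [F, Finset.mem_insert, Finset.mem_singleton] at hp
      have hmem : ∀ u v : ℕ, u ≤ n - 1 → v ≤ n - 1 → ((u:ℤ), (v:ℤ)) ∈ grid n := by
        intro u v hu hv
        simp only [grid, Finset.mem_product, Finset.mem_Icc]
        constructor
        · constructor
          · positivity
          · have : (u:ℤ) ≤ ((n-1 : ℕ) : ℤ) := by exact_mod_cast hu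
            push_cast at this
            omega
        · constructor
          · positivity
          · have : (v:ℤ) ≤ ((n-1 : ℕ) : ℤ) := by exact_mod_cast hv
            push_cast at this
            omega
      rcases hp with h | h | h <;> subst h <;> apply hmem <;> omega
    · -- card = 3
      simp only [F]
      rw [Finset.card_insert_of_notMem, Finset.card_insert_of_notMem, Finset.card_singleton]
      · simp only [Finset.mem_singleton, Prod.mk.injEq, not_and]
        intro h
        exfalso
        have : x + k*a = x + d*a := by exact_mod_cast h
        omega
      · simp only [Finset.mem_insert, Finset.mem_singleton, Prod.mk.injEq, not_or, not_and]
        constructor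
        · intro h
          exfalso
          have : x = x + k*a := by exact_mod_cast h
          have : 1 ≤ k*a := Nat.one_le_iff_ne_zero.mpr (by positivity)
          omega
        · intro h
          exfalso
          have : x = x + d*a := by exact_mod_cast h
          have : 1 ≤ d*a := Nat.one_le_iff_ne_zero.mpr (by positivity)
          omega
    · -- collinear
      apply collinear_of_line (x:ℤ) (y:ℤ) (a:ℤ) (b:ℤ)
      · exact_mod_cast Nat.one_le_iff_ne_zero.mp ha1
      · exact_mod_cast Nat.one_le_iff_ne_zero.mp hb1
      · intro p hp
        simp only [F, Finset.mem_insert, Finset.mem_singleton] at hp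
        rcases hp with h | h | h <;> subst h <;> push_cast <;> ring
  · -- injective
    rintro ⟨d, k, ⟨a, b⟩, x, y⟩ ht ⟨d', k', ⟨a', b'⟩, x', y'⟩ ht' heq
    obtain ⟨hd2, hk1, hkd, ha1, hb1, hgcd, hx, hy, hda, hdb⟩ := bounds_of_mem ht
    obtain ⟨hd2', hk1', hkd', ha1', hb1', hgcd', hx', hy', hda', hdb'⟩ := bounds_of_mem ht'
    simp only [Finset.mem_coe] at ht ht'
    simp only [F] at heq
    have hka : k * a < d * a := (Nat.mul_lt_mul_right (by omega : 0 < a)).mpr hkd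
    have hka' : k' * a' < d' * a' := (Nat.mul_lt_mul_right (by omega : 0 < a')).mpr hkd'
    have hkb : k * b < d * b := (Nat.mul_lt_mul_right (by omega : 0 < b)).mpr hkd
    have hkb' : k' * b' < d' * b' := (Nat.mul_lt_mul_right (by omega : 0 < b')).mpr hkd'
    have h1ka : 1 ≤ k * a := Nat.one_le_iff_ne_zero.mpr (by positivity)
    have h1ka' : 1 ≤ k' * a' := Nat.one_le_iff_ne_zero.mpr (by positivity)
    have h1kb : 1 ≤ k * b := Nat.one_le_iff_ne_zero.mpr (by positivity)
    have h1kb' : 1 ≤ k' * b' := Nat.one_le_iff_ne_zero.mpr (by positivity)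
    have hmem : ∀ p : ℤ × ℤ, p ∈ ({((x : ℤ), (y : ℤ)), (((x + k*a : ℕ) : ℤ), ((y + k*b : ℕ) : ℤ)),
        (((x + d*a : ℕ) : ℤ), ((y + d*b : ℕ) : ℤ))} : Finset (ℤ × ℤ)) ↔
        p ∈ ({((x' : ℤ), (y' : ℤ)), (((x' + k'*a' : ℕ) : ℤ), ((y' + k'*b' : ℕ) : ℤ)),
        (((x' + d'*a' : ℕ) : ℤ), ((y' + d'*b' : ℕ) : ℤ))} : Finset (ℤ × ℤ)) := by
      rw [heq]; simp
    have m1 := (hmem ((x : ℤ), (y : ℤ))).mp (by simp)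
    have m2 := (hmem (((x + k*a : ℕ) : ℤ), ((y + k*b : ℕ) : ℤ))).mp (by simp)
    have m3 := (hmem (((x + d*a : ℕ) : ℤ), ((y + d*b : ℕ) : ℤ))).mp (by simp)
    have m4 := (hmem ((x' : ℤ), (y' : ℤ))).mpr (by simp)
    have m5 := (hmem (((x' + k'*a' : ℕ) : ℤ), ((y' + k'*b' : ℕ) : ℤ))).mpr (by simp)
    have m6 := (hmem (((x' + d'*a' : ℕ) : ℤ), ((y' + d'*b' : ℕ) : ℤ))).mpr (by simp)
    simp only [Finset.mem_insert, Finset.mem_singleton, Prod.mk.injEq] at m1 m2 m3 m4 m5 m6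
    set A := k*a with hA
    set B := k*b with hB
    set C := d*a with hC
    set D := d*b with hD
    set A' := k'*a' with hA'
    set B' := k'*b' with hB'
    set C' := d'*a' with hC'
    set D' := d'*b' with hD'
    have key : x = x' ∧ y = y' ∧ A = A' ∧ B = B' ∧ C = C' ∧ D = D' := by omega
    obtain ⟨ex, ey, eA, eB, eC, eD⟩ := key
    have ed : d = d' := by
      have e1 : d = Nat.gcd C D := by rw [hC, hD, Nat.gcd_mul_left, hgcd, mul_one]
      have e2 : d' = Nat.gcd C' D' := by rw [hC', hD', Nat.gcd_mul_left, hgcd', mul_one]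
      rw [e1, e2, eC, eD]
    have ea : a = a' := by
      rw [hC, hC', ← ed] at eC
      exact Nat.eq_of_mul_eq_mul_left (by omega) eC
    have eb : b = b' := by
      rw [hD, hD', ← ed] at eD
      exact Nat.eq_of_mul_eq_mul_left (by omega) eD
    have ek : k = k' := by
      rw [hA, hA', ← ea] at eA
      exact Nat.eq_of_mul_eq_mul_right (by omega) eA
    subst ex; subst ey; subst ed; subst ea; subst eb; subst ek
    rfl

lemma harmonic_lb (N : ℕ) : Real.log ((N:ℝ)+1) ≤ ∑ i ∈ Icc 1 N, (1:ℝ)/i := by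
  induction N with
  | zero => simp
  | succ N ih =>
      rw [Finset.sum_Icc_succ_top (by omega : 1 ≤ N+1)]
      have hpos1 : (0:ℝ) < (N:ℝ)+1 := by positivity
      have hpos2 : (0:ℝ) < ((N:ℝ)+1+1)/((N:ℝ)+1) := by positivity
      have hlog := Real.log_le_sub_one_of_pos hpos2
      rw [Real.log_div (by positivity) (by positivity)] at hlog
      have e : ((N:ℝ)+1+1)/((N:ℝ)+1) - 1 = 1/((N:ℝ)+1) := by field_simp; ring
      push_cast
      linarith

lemma log_large {n : ℕ} (hn : 100000000 ≤ n) : (16:ℝ) ≤ Real.log n := by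
  have h1 : (0:ℝ) < n := by exact_mod_cast (by omega : 0 < n)
  rw [Real.le_log_iff_exp_le h1]
  have h2 : Real.exp 16 = (Real.exp 1)^(16:ℕ) := by
    rw [← Real.exp_nat_mul]; norm_num
  rw [h2]
  have h3 : (Real.exp 1) ≤ 2.7182818286 := le_of_lt Real.exp_one_lt_d9
  have h4 : (Real.exp 1)^(16:ℕ) ≤ (2.7182818286:ℝ)^(16:ℕ) :=
    pow_le_pow_left₀ (le_of_lt (Real.exp_pos 1)) h3 16
  have h5 : (2.7182818286:ℝ)^(16:ℕ) ≤ 100000000 := by norm_num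
  have h6 : (100000000:ℝ) ≤ n := by exact_mod_cast hn
  linarith

lemma param_card_lb (n : ℕ) (hn : 100000000 ≤ n) :
    (n:ℝ)^4/4096 * (Real.log n / 2) ≤ ((Param n).card : ℝ) := by
  have hn0 : (0:ℝ) < n := by exact_mod_cast (by omega : 0 < n)
  have hcard : (Param n).card =
      ∑ d ∈ Icc 2 (n/8), (d-1) * ((copPairs (n/(8*d))).card * ((n/2+1) * (n/2+1))) := by
    rw [Param, Finset.card_sigma]
    apply Finset.sum_congr rfl
    intro d _
    simp [Finset.card_product, Nat.card_Icc]
  have hterm : ∀ d ∈ Icc 2 (n/8),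
      (n:ℝ)^4/4096 * (1/(d:ℝ)) ≤
        (((d-1) * ((copPairs (n/(8*d))).card * ((n/2+1) * (n/2+1))) : ℕ) : ℝ) := by
    intro d hd
    rw [Finset.mem_Icc] at hd
    obtain ⟨hd2, hd8⟩ := hd
    have hdR : (2:ℝ) ≤ (d:ℝ) := by exact_mod_cast hd2
    set m := n/(8*d) with hm
    have h8d : 8*d ≤ n := by omega
    have hm1 : 1 ≤ m := by rw [hm]; exact Nat.one_le_div_iff (by omega) |>.mpr h8d
    have hQ : 8*d ≤ 8*d*m := Nat.le_mul_of_pos_right _ (by omega)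
    have e1 : 8*d*m + n % (8*d) = n := Nat.div_add_mod n (8*d)
    have e2 : n % (8*d) < 8*d := Nat.mod_lt _ (by omega)
    have hnat : n ≤ 2*(8*d*m) := by
      calc n = 8*d*m + n % (8*d) := e1.symm
        _ ≤ 8*d*m + 8*d := by omega
        _ ≤ 8*d*m + 8*d*m := Nat.add_le_add_left hQ _
        _ = 2*(8*d*m) := by ring
    have hmR : (n:ℝ)/(16*(d:ℝ)) ≤ (m:ℝ) := by
      rw [div_le_iff₀ (by positivity)]
      have h : (n:ℝ) ≤ 2*(8*(d:ℝ)*(m:ℝ)) := by exact_mod_cast hnat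
      linarith
    have hcop := copPairs_card m
    have hmsq : ((n:ℝ)/(16*(d:ℝ)))^2/2 ≤ ((copPairs m).card : ℝ) := by
      have hsq := pow_le_pow_left₀ (by positivity) hmR 2
      linarith
    have hhalf : (n:ℝ)/2 ≤ ((n/2+1 : ℕ) : ℝ) := by
      have h2 : n < 2*(n/2+1) := by omega
      have h3 : (n:ℝ) < 2*((n/2+1 : ℕ):ℝ) := by exact_mod_cast h2
      linarith
    have hd1 : (d:ℝ)/2 ≤ ((d-1 : ℕ) : ℝ) := by
      have h2 : d ≤ 2*(d-1) := by omega
      have h3 : (d:ℝ) ≤ 2*((d-1:ℕ):ℝ) := by exact_mod_cast h2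
      linarith
    calc (n:ℝ)^4/4096 * (1/(d:ℝ))
        = ((d:ℝ)/2) * ((((n:ℝ)/(16*(d:ℝ)))^2/2) * (((n:ℝ)/2) * ((n:ℝ)/2))) := by
          field_simp
          ring
      _ ≤ ((d-1:ℕ):ℝ) * (((copPairs m).card : ℝ) * ((((n/2+1:ℕ)):ℝ) * (((n/2+1:ℕ)):ℝ))) := by
          apply mul_le_mul hd1 ?_ (by positivity) (by positivity)
          apply mul_le_mul hmsq ?_ (by positivity) (by positivity)
          apply mul_le_mul hhalf hhalf (by positivity) (by positivity)
      _ = (((d-1) * ((copPairs m).card * ((n/2+1) * (n/2+1))) : ℕ) : ℝ) := by push_cast; ring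
  have hsum : ∑ d ∈ Icc 2 (n/8), (n:ℝ)^4/4096 * (1/(d:ℝ)) ≤ ((Param n).card : ℝ) := by
    rw [hcard, Nat.cast_sum]
    exact Finset.sum_le_sum hterm
  have hharm : Real.log ((n:ℝ)/8) - 1 ≤ ∑ d ∈ Icc 2 (n/8), 1/(d:ℝ) := by
    have hsplit : insert 1 (Icc 2 (n/8)) = Icc 1 (n/8) := by
      ext j; simp only [Finset.mem_insert, Finset.mem_Icc]; omega
    have h1 : ∑ d ∈ Icc 1 (n/8), (1:ℝ)/d = 1 + ∑ d ∈ Icc 2 (n/8), (1:ℝ)/d := by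
      rw [← hsplit, Finset.sum_insert (by simp)]
      norm_num
    have h2 := harmonic_lb (n/8)
    have h3 : Real.log ((n:ℝ)/8) ≤ Real.log (((n/8:ℕ):ℝ)+1) := by
      apply Real.log_le_log (by positivity)
      have h4 : n < 8*(n/8+1) := by omega
      have h5 : (n:ℝ) < 8*(((n/8:ℕ):ℝ)+1) := by exact_mod_cast h4
      linarith
    linarith
  have hlog16 := log_large hn
  have hlog8 : Real.log 8 ≤ 7 := by
    have := Real.log_le_sub_one_of_pos (by norm_num : (0:ℝ) < 8)
    linarith
  have hkey : Real.log n / 2 ≤ Real.log ((n:ℝ)/8) - 1 := by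
    rw [Real.log_div (by positivity) (by norm_num)]
    linarith
  have hmul : (n:ℝ)^4/4096 * (Real.log n/2) ≤ (n:ℝ)^4/4096 * (∑ d ∈ Icc 2 (n/8), 1/(d:ℝ)) := by
    apply mul_le_mul_of_nonneg_left (le_trans hkey hharm) (by positivity)
  rw [Finset.mul_sum] at hmul
  exact le_trans hmul hsum

theorem collinearTriples_lower :
    ∃ c : ℝ, 0 < c ∧ ∀ᶠ n : ℕ in atTop,
      c * (n : ℝ) ^ 4 * Real.log n ≤ (collinearTriples n : ℝ) := by
  refine ⟨1/8192, by norm_num, ?_⟩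
  filter_upwards [Filter.eventually_ge_atTop 100000000] with n hn
  have h1 := param_card_lb n hn
  have h2 := card_Param_le n (by omega)
  have h2R : ((Param n).card : ℝ) ≤ (collinearTriples n : ℝ) := by exact_mod_cast h2
  calc (1/8192) * (n:ℝ)^4 * Real.log n = (n:ℝ)^4/4096 * (Real.log n/2) := by ring
    _ ≤ ((Param n).card : ℝ) := h1
    _ ≤ _ := h2R
end

section
/- If f_n denotes the maximum size of a subset of {1,...,n}² with no three collinear points, then f_n ≥ n for all n ≥ 1 (e.g. witnessed by points on a suitable curve or by monotonicity from smaller constructions: concretely, the set {(x, x² mod p) : 0 ≤ x < p} for a prime p ≤ n has no three collinear points when embedded in the grid). -/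
lemma add_mod_right_mod (a x p : ℕ) : (a + x % p) % p = (a + x) % p := by
  conv_lhs => rw [Nat.add_mod]
  conv_rhs => rw [Nat.add_mod]
  rw [Nat.mod_mod_of_dvd _ dvd_rfl]

lemma mod_add_left_mod (a y p : ℕ) : (a % p + y) % p = (a + y) % p := by
  conv_lhs => rw [Nat.add_mod]
  conv_rhs => rw [Nat.add_mod]
  rw [Nat.mod_mod_of_dvd _ dvd_rfl]

/-- For fixed `a`, as `c` ranges over `[0,p)`, the value `(a+c) % p` ranges
bijectively over `[0,p)`; hence exactly `t` values of `c` give `(a+c) % p < t`. -/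
lemma count_shift (p t a : ℕ) (hp : 0 < p) (htp : t ≤ p) :
    ((Finset.range p).filter (fun c => (a + c) % p < t)).card = t := by
  have key : ∀ w : ℕ, (a + (w + (p - a % p)) % p) % p = (w + p) % p := by
    intro w
    have hap : a % p < p := Nat.mod_lt _ hp
    rw [add_mod_right_mod, ← mod_add_left_mod a (w + (p - a % p)) p,
      show a % p + (w + (p - a % p)) = w + p by omega]
  have h1 : ((Finset.range p).filter (fun c => (a + c) % p < t)).card
      = (Finset.range t).card := by
    apply Finset.card_nbij (fun c => (a + c) % p)
    · intro x hx
      simp only [Finset.mem_coe, Finset.mem_filter] at hx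
      exact Finset.mem_range.2 hx.2
    · intro x hx y hy hxy
      simp only [Finset.coe_filter, Set.mem_setOf_eq, Finset.mem_range] at hx hy
      have hmx : x % p = y % p := by
        have h : a + x ≡ a + y [MOD p] := hxy
        exact Nat.ModEq.add_left_cancel' a h
      rw [Nat.mod_eq_of_lt hx.1, Nat.mod_eq_of_lt hy.1] at hmx
      exact hmx
    · intro w hw
      simp only [Finset.coe_range, Set.mem_Iio] at hw
      have hwp : w < p := lt_of_lt_of_le hw htp
      have hkey : (a + (w + (p - a % p)) % p) % p = w := by
        rw [key w, Nat.add_mod_right, Nat.mod_eq_of_lt hwp]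
      refine ⟨(w + (p - a % p)) % p, ?_, hkey⟩
      simp only [Finset.coe_filter, Set.mem_setOf_eq, Finset.mem_range]
      exact ⟨Nat.mod_lt _ hp, by rw [hkey]; exact hw⟩
  rw [h1, Finset.card_range]

/-- Pigeonhole: some vertical shift `c` of the parabola has at least `t`
values below `t`. -/
lemma exists_good_c (p t : ℕ) (hp : 0 < p) (htp : t ≤ p) :
    ∃ c, t ≤ ((Finset.range p).filter (fun r => (r * r + c) % p < t)).card := by
  have hsum : ∑ c ∈ Finset.range p,
      ((Finset.range p).filter (fun r => (r * r + c) % p < t)).card = p * t := by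
    calc ∑ c ∈ Finset.range p,
        ((Finset.range p).filter (fun r => (r * r + c) % p < t)).card
        = ∑ c ∈ Finset.range p, ∑ r ∈ Finset.range p,
            (if (r * r + c) % p < t then 1 else 0) := by
          refine Finset.sum_congr rfl (fun c _ => ?_)
          rw [Finset.card_filter]
      _ = ∑ r ∈ Finset.range p, ∑ c ∈ Finset.range p,
            (if (r * r + c) % p < t then 1 else 0) := Finset.sum_comm
      _ = ∑ r ∈ Finset.range p, t := by
          refine Finset.sum_congr rfl (fun r _ => ?_)
          rw [← Finset.card_filter]
          exact count_shift p t (r * r) hp htp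
      _ = p * t := by rw [Finset.sum_const, Finset.card_range, smul_eq_mul]
  have hne : (Finset.range p).Nonempty := ⟨0, Finset.mem_range.2 hp⟩
  have hle : ∑ _c ∈ Finset.range p, t ≤ ∑ c ∈ Finset.range p,
      ((Finset.range p).filter (fun r => (r * r + c) % p < t)).card := by
    rw [hsum, Finset.sum_const, Finset.card_range, smul_eq_mul]
  obtain ⟨c, _, hc⟩ := Finset.exists_le_of_sum_le hne hle
  exact ⟨c, hc⟩

set_option maxHeartbeats 1000000 in
/-- `f n ≥ n`: there is a subset of the `{1,…,n}²` grid of size at least `n`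
with no three collinear points. -/
theorem no_three_in_line_lower_bound (n : ℕ) (hn : 1 ≤ n) :
    ∃ T : Finset (ℤ × ℤ),
      (∀ p ∈ T, 1 ≤ p.1 ∧ p.1 ≤ (n : ℤ) ∧ 1 ≤ p.2 ∧ p.2 ≤ (n : ℤ)) ∧
      (∀ p ∈ T, ∀ q ∈ T, ∀ r ∈ T, p ≠ q → p ≠ r → q ≠ r →
        (q.1 - p.1) * (r.2 - p.2) - (q.2 - p.2) * (r.1 - p.1) ≠ 0) ∧
      n ≤ T.card := by
  rcases eq_or_lt_of_le hn with h1 | h2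
  · -- n = 1
    refine ⟨{((1 : ℤ), (1 : ℤ))}, ?_, ?_, ?_⟩
    · intro P hP
      simp only [Finset.mem_singleton] at hP
      subst hP
      refine ⟨le_refl _, ?_, le_refl _, ?_⟩ <;> simp [← h1]
    · intro P hP Q hQ R hR hPQ hPR hQR
      simp only [Finset.mem_singleton] at hP hQ
      exact absurd (hP.trans hQ.symm) hPQ
    · simp [← h1]
  -- n ≥ 2
  obtain ⟨p, hp, hp1, hp2⟩ := Nat.exists_prime_lt_and_le_two_mul (n / 2) (by omega)
  have hppos : 0 < p := hp.pos
  have hpn : p ≤ n := by omega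
  have hn2p : n < 2 * p := by omega
  obtain ⟨c, hc⟩ := exists_good_c p (n - p) hppos (by omega)
  classical
  set A : Finset (ℤ × ℤ) := (Finset.range p).image
      (fun r : ℕ => ((r : ℤ) + 1, (((r * r + c) % p : ℕ) : ℤ) + 1)) with hA
  set B : Finset (ℤ × ℤ) :=
      ((Finset.range p).filter (fun r => (r * r + c) % p < n - p)).image
      (fun r : ℕ => ((r : ℤ) + 1, (((r * r + c) % p : ℕ) : ℤ) + (p : ℤ) + 1)) with hB
  have hvlt : ∀ r : ℕ, (r * r + c) % p < p := fun r => Nat.mod_lt _ hppos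
  have hmem : ∀ P ∈ A ∪ B, ∃ r : ℕ, r < p ∧ P.1 = (r : ℤ) + 1 ∧
      (P.2 = (((r * r + c) % p : ℕ) : ℤ) + 1 ∨
        ((r * r + c) % p < n - p ∧
          P.2 = (((r * r + c) % p : ℕ) : ℤ) + (p : ℤ) + 1)) := by
    intro P hP
    rcases Finset.mem_union.1 hP with h | h
    · obtain ⟨r, hr, rfl⟩ := Finset.mem_image.1 h
      exact ⟨r, Finset.mem_range.1 hr, rfl, Or.inl rfl⟩
    · obtain ⟨r, hr, rfl⟩ := Finset.mem_image.1 h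
      obtain ⟨hr1, hr2⟩ := Finset.mem_filter.1 hr
      exact ⟨r, Finset.mem_range.1 hr1, rfl, Or.inr ⟨hr2, rfl⟩⟩
  have hval : ∀ r : ℕ, ∃ k : ℤ,
      (((r * r + c) % p : ℕ) : ℤ) = (r : ℤ) * (r : ℤ) + (c : ℤ) - (p : ℤ) * k := by
    intro r
    refine ⟨((r * r + c) / p : ℕ), ?_⟩
    have h := Nat.mod_add_div (r * r + c) p
    have h2 := congrArg (fun m : ℕ => (m : ℤ)) h
    push_cast at h2 ⊢
    linarith
  have hyy : ∀ (y : ℤ) (r : ℕ),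
      (y = (((r * r + c) % p : ℕ) : ℤ) + 1 ∨
        ((r * r + c) % p < n - p ∧
          y = (((r * r + c) % p : ℕ) : ℤ) + (p : ℤ) + 1)) →
      ∃ k : ℤ, y = (r : ℤ) * (r : ℤ) + (c : ℤ) + 1 + (p : ℤ) * k := by
    intro y r h
    obtain ⟨k, hk⟩ := hval r
    rcases h with h | ⟨-, h⟩
    · exact ⟨-k, by rw [h, hk]; ring⟩
    · exact ⟨1 - k, by rw [h, hk]; ring⟩
  refine ⟨A ∪ B, ?_, ?_, ?_⟩
  · -- bounds
    intro P hP
    obtain ⟨r, hr, hx, hy⟩ := hmem P hP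
    have hvr := hvlt r
    rcases hy with hy | ⟨hyt, hy⟩ <;>
      exact ⟨by rw [hx]; omega, by rw [hx]; omega, by rw [hy]; omega,
        by rw [hy]; omega⟩
  · -- no three collinear
    intro P hP Q hQ R hR hPQ hPR hQR
    obtain ⟨r1, hr1, hx1, hy1⟩ := hmem P hP
    obtain ⟨r2, hr2, hx2, hy2⟩ := hmem Q hQ
    obtain ⟨r3, hr3, hx3, hy3⟩ := hmem R hR
    by_cases h12 : r1 = r2
    · -- P, Q in the same column
      have hxPQ : Q.1 = P.1 := by rw [hx1, hx2, h12]
      have hyPQ : Q.2 ≠ P.2 := by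
        intro h
        exact hPQ (Prod.ext_iff.mpr ⟨hxPQ.symm, h.symm⟩)
      by_cases h13 : r1 = r3
      · -- all three in the same column: impossible
        exfalso
        have hxPR : R.1 = P.1 := by rw [hx1, hx3, h13]
        have hyPR : R.2 ≠ P.2 := by
          intro h
          exact hPR (Prod.ext_iff.mpr ⟨hxPR.symm, h.symm⟩)
        have hyQR : R.2 ≠ Q.2 := by
          intro h
          exact hQR (Prod.ext_iff.mpr ⟨(hxPR.trans hxPQ.symm).symm, h.symm⟩)
        rw [← h12] at hy2
        rw [← h13] at hy3
        have e1 : P.2 = (((r1 * r1 + c) % p : ℕ) : ℤ) + 1 ∨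
            P.2 = (((r1 * r1 + c) % p : ℕ) : ℤ) + (p : ℤ) + 1 :=
          hy1.imp id And.right
        have e2 : Q.2 = (((r1 * r1 + c) % p : ℕ) : ℤ) + 1 ∨
            Q.2 = (((r1 * r1 + c) % p : ℕ) : ℤ) + (p : ℤ) + 1 :=
          hy2.imp id And.right
        have e3 : R.2 = (((r1 * r1 + c) % p : ℕ) : ℤ) + 1 ∨
            R.2 = (((r1 * r1 + c) % p : ℕ) : ℤ) + (p : ℤ) + 1 :=
          hy3.imp id And.right
        rcases e1 with e1 | e1 <;> rcases e2 with e2 | e2 <;> rcases e3 with e3 | e3 <;>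
          omega
      · -- R in a different column
        have hR1 : R.1 - P.1 ≠ 0 := by
          rw [hx1, hx3]
          intro h
          have h' : (r3 : ℤ) = (r1 : ℤ) := by linarith
          exact h13 (by exact_mod_cast h'.symm)
        have hdet : (Q.1 - P.1) * (R.2 - P.2) - (Q.2 - P.2) * (R.1 - P.1)
            = -((Q.2 - P.2) * (R.1 - P.1)) := by rw [hxPQ]; ring
        rw [hdet]
        exact neg_ne_zero.2 (mul_ne_zero (sub_ne_zero.2 hyPQ) hR1)
    · by_cases h13 : r1 = r3
      · -- P, R same column, Q different
        have hxPR : R.1 = P.1 := by rw [hx1, hx3, h13]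
        have hyPR : R.2 ≠ P.2 := by
          intro h
          exact hPR (Prod.ext_iff.mpr ⟨hxPR.symm, h.symm⟩)
        have hQ1 : Q.1 - P.1 ≠ 0 := by
          rw [hx1, hx2]
          intro h
          have h' : (r2 : ℤ) = (r1 : ℤ) := by linarith
          exact h12 (by exact_mod_cast h'.symm)
        have hdet : (Q.1 - P.1) * (R.2 - P.2) - (Q.2 - P.2) * (R.1 - P.1)
            = (Q.1 - P.1) * (R.2 - P.2) := by rw [hxPR]; ring
        rw [hdet]
        exact mul_ne_zero hQ1 (sub_ne_zero.2 hyPR)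
      · by_cases h23 : r2 = r3
        · -- Q, R same column, P different
          have hxQR : R.1 = Q.1 := by rw [hx2, hx3, h23]
          have hyQR : R.2 ≠ Q.2 := by
            intro h
            exact hQR (Prod.ext_iff.mpr ⟨hxQR.symm, h.symm⟩)
          have hQ1 : Q.1 - P.1 ≠ 0 := by
            rw [hx1, hx2]
            intro h
            have h' : (r2 : ℤ) = (r1 : ℤ) := by linarith
            exact h12 (by exact_mod_cast h'.symm)
          have hdet : (Q.1 - P.1) * (R.2 - P.2) - (Q.2 - P.2) * (R.1 - P.1)
              = (Q.1 - P.1) * (R.2 - Q.2) := by rw [hxQR]; ring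
          rw [hdet]
          exact mul_ne_zero hQ1 (sub_ne_zero.2 hyQR)
        · -- all three columns distinct: mod-p argument
          intro hdet
          obtain ⟨k1, hk1⟩ := hyy P.2 r1 hy1
          obtain ⟨k2, hk2⟩ := hyy Q.2 r2 hy2
          obtain ⟨k3, hk3⟩ := hyy R.2 r3 hy3
          rw [hx1, hx2, hx3, hk1, hk2, hk3] at hdet
          have hdvd : (p : ℤ) ∣
              ((r2 : ℤ) - r1) * (((r3 : ℤ) - r1) * ((r3 : ℤ) - r2)) := by
            refine ⟨((r3 : ℤ) - r1) * (k2 - k1) - ((r2 : ℤ) - r1) * (k3 - k1), ?_⟩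
            linear_combination hdet
          have hp' : Prime (p : ℤ) := Nat.prime_iff_prime_int.mp hp
          have habs : ∀ a b : ℕ, a < p → b < p → a ≠ b →
              ¬ ((p : ℤ) ∣ ((a : ℤ) - b)) := by
            intro a b ha hb hab hdvd'
            have h0 : (a : ℤ) - b = 0 :=
              Int.eq_zero_of_abs_lt_dvd hdvd' (abs_lt.2 ⟨by omega, by omega⟩)
            have h' : (a : ℤ) = b := by linarith
            exact hab (by exact_mod_cast h')
          rcases hp'.dvd_mul.1 hdvd with h | h
          · exact habs r2 r1 hr2 hr1 (fun e => h12 e.symm) h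
          · rcases hp'.dvd_mul.1 h with h | h
            · exact habs r3 r1 hr3 hr1 (fun e => h13 e.symm) h
            · exact habs r3 r2 hr3 hr2 (fun e => h23 e.symm) h
  · -- cardinality
    have hdisj : Disjoint A B := by
      rw [Finset.disjoint_left]
      intro P hPA hPB
      rw [hA] at hPA
      rw [hB] at hPB
      obtain ⟨r, hr, hre⟩ := Finset.mem_image.1 hPA
      obtain ⟨s, hs, hse⟩ := Finset.mem_image.1 hPB
      have h2 : P.2 = (((r * r + c) % p : ℕ) : ℤ) + 1 := by rw [← hre]
      have h2' : P.2 = (((s * s + c) % p : ℕ) : ℤ) + (p : ℤ) + 1 := by rw [← hse]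
      have hr' := hvlt r
      omega
    rw [Finset.card_union_of_disjoint hdisj, hA, hB,
      Finset.card_image_of_injOn (fun a _ b _ h => by
        have h' : (a : ℤ) + 1 = (b : ℤ) + 1 := congrArg Prod.fst h
        exact_mod_cast (by linarith : (a : ℤ) = b)),
      Finset.card_image_of_injOn (fun a _ b _ h => by
        have h' : (a : ℤ) + 1 = (b : ℤ) + 1 := congrArg Prod.fst h
        exact_mod_cast (by linarith : (a : ℤ) = b)),
      Finset.card_range]
    omega
end
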